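/- Let N ≥ 1, p > 1, κ ≥ 0 and 0 < ν ≤ C. Let Ψ : ℝ^N → ℝ be of class C¹ with Ψ(0) = 0 and ∇Ψ(0) = 0, satisfying the sandwich condition for Ψ_{p,κ} with constants ν, C; assume moreover that Ψ is of class C² on ℝ^N \ {0} if κ = 0 and 1 < p < 2, and of class C² on all of ℝ^N otherwise. Then the gradient map ∇Ψ : ℝ^N → ℝ^N is locally Hölder continuous: there exists α ∈ (0,1] such that for every R > 0 there is a constant L ≥ 0 with |∇Ψ(x) − ∇Ψ(y)| ≤ L |x − y|^α for all x, y ∈ ℝ^N with |x| ≤ R and |y| ≤ R. -/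

import Mathlib

open Filter Topology

/-- The function `Ψ_{p,κ}(ξ) = (1/p) * ((κ² + |ξ|²)^(p/2) - κ^p)`. -/
noncomputable def PsiPK (N : ℕ) (p κ : ℝ) (ξ : EuclideanSpace ℝ (Fin N)) : ℝ :=
  (1 / p) * ((κ ^ 2 + ‖ξ‖ ^ 2) ^ (p / 2) - κ ^ p)

/-- `Ψ` satisfies the sandwich condition for `Ψ_{p,κ}` with constants `ν ≤ C`:
both `Ψ - ν Ψ_{p,κ}` and `C Ψ_{p,κ} - Ψ` are convex. -/
def SandwichCond (N : ℕ) (p κ ν C : ℝ) (Ψ : EuclideanSpace ℝ (Fin N) → ℝ) : Prop :=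
  ConvexOn ℝ Set.univ (fun ξ => Ψ ξ - ν * PsiPK N p κ ξ) ∧
    ConvexOn ℝ Set.univ (fun ξ => C * PsiPK N p κ ξ - Ψ ξ)

/-- Bernoulli, convex side: for `1 ≤ m`, `a^m + m a^(m-1) (b-a) ≤ b^m`. -/
lemma bern_ge {a b m : ℝ} (ha : 0 ≤ a) (hb : 0 ≤ b) (hm : 1 ≤ m) :
    a ^ m + m * a ^ (m - 1) * (b - a) ≤ b ^ m := by
  rcases ha.eq_or_lt with rfl | ha'
  · rcases eq_or_lt_of_le hm with rfl | hm'
    · simp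
    · rw [Real.zero_rpow (by linarith), Real.zero_rpow (by linarith)]
      simpa using Real.rpow_nonneg hb m
  · have hs : -1 ≤ b / a - 1 := by
      have : 0 ≤ b / a := div_nonneg hb ha'.le
      linarith
    have key := one_add_mul_self_le_rpow_one_add hs hm
    have h1 : (1 : ℝ) + (b / a - 1) = b / a := by ring
    rw [h1, Real.div_rpow hb ha'.le] at key
    have hap : (0:ℝ) < a ^ m := Real.rpow_pos_of_pos ha' m
    have key2 : (1 + m * (b / a - 1)) * a ^ m ≤ b ^ m := by
      calc (1 + m * (b / a - 1)) * a ^ m ≤ b ^ m / a ^ m * a ^ m := by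
            exact mul_le_mul_of_nonneg_right key hap.le
        _ = b ^ m := by field_simp
    calc a ^ m + m * a ^ (m - 1) * (b - a)
        = (1 + m * (b / a - 1)) * a ^ m := by
          have : a ^ (m - 1) = a ^ m / a := by
            rw [Real.rpow_sub ha', Real.rpow_one]
          rw [this]; field_simp
      _ ≤ b ^ m := key2

/-- Bernoulli, concave side: for `0 ≤ m ≤ 1`, `a > 0`, `b^m ≤ a^m + m a^(m-1) (b-a)`. -/
lemma bern_le {a b m : ℝ} (ha : 0 < a) (hb : 0 ≤ b) (hm0 : 0 ≤ m) (hm : m ≤ 1) :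
    b ^ m ≤ a ^ m + m * a ^ (m - 1) * (b - a) := by
  have hs : -1 ≤ b / a - 1 := by
    have : 0 ≤ b / a := div_nonneg hb ha.le
    linarith
  have key := rpow_one_add_le_one_add_mul_self hs hm0 hm
  have h1 : (1 : ℝ) + (b / a - 1) = b / a := by ring
  rw [h1, Real.div_rpow hb ha.le] at key
  have hap : (0:ℝ) < a ^ m := Real.rpow_pos_of_pos ha m
  have key2 : b ^ m ≤ (1 + m * (b / a - 1)) * a ^ m := by
    calc b ^ m = b ^ m / a ^ m * a ^ m := by field_simp
      _ ≤ (1 + m * (b / a - 1)) * a ^ m := mul_le_mul_of_nonneg_right key hap.le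
  calc b ^ m ≤ (1 + m * (b / a - 1)) * a ^ m := key2
    _ = a ^ m + m * a ^ (m - 1) * (b - a) := by
        have : a ^ (m - 1) = a ^ m / a := by rw [Real.rpow_sub ha, Real.rpow_one]
        rw [this]; field_simp

/-- Subadditivity of `x ↦ x^m` for `0 ≤ m ≤ 1` on nonneg reals. -/
lemma rpow_subadd {a b m : ℝ} (ha : 0 ≤ a) (hb : 0 ≤ b) (hm0 : 0 ≤ m) (hm : m ≤ 1) :
    (a + b) ^ m ≤ a ^ m + b ^ m := by
  have := NNReal.rpow_add_le_add_rpow (a.toNNReal) (b.toNNReal) hm0 hm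
  have h := NNReal.coe_le_coe.2 this
  rw [NNReal.coe_add] at h
  simpa [NNReal.coe_rpow, Real.coe_toNNReal a ha, Real.coe_toNNReal b hb] using h

lemma sq_rpow_eq {X : ℝ} (hX : 0 ≤ X) (m : ℝ) : (X ^ 2 : ℝ) ^ m = X ^ (2 * m) := by
  rw [← Real.rpow_natCast X 2, ← Real.rpow_mul hX]
  norm_num

lemma sqrt_rpow_eq {A : ℝ} (hA : 0 ≤ A) (m : ℝ) : A ^ m = (Real.sqrt A) ^ (2 * m) := by
  rw [Real.rpow_mul (Real.sqrt_nonneg A) 2 m]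
  congr 1
  rw [Real.rpow_two, Real.sq_sqrt hA]

/-- Scalar bound on differences of powers, exponent `q > 0`, on `[0, S]`. -/
lemma rpow_diff_le {q A B S D : ℝ} (hq : 0 < q) (hA : 0 ≤ A) (hAB : A ≤ B) (hBS : B ≤ S)
    (hD : B - A ≤ D) (hD0 : 0 ≤ D) :
    B ^ q - A ^ q ≤ D ^ (min 1 q) + q * S ^ (q - 1) * D := by
  have hB : 0 ≤ B := hA.trans hAB
  have hS : 0 ≤ S := hB.trans hBS
  rcases le_or_gt q 1 with hq1 | hq1
  · rw [min_eq_right hq1]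
    have h1 : B ^ q ≤ A ^ q + (B - A) ^ q := by
      have := rpow_subadd hA (by linarith : (0:ℝ) ≤ B - A) hq.le hq1
      rw [show A + (B - A) = B by ring] at this
      exact this
    have h2 : (B - A) ^ q ≤ D ^ q := Real.rpow_le_rpow (by linarith) hD hq.le
    have h3 : 0 ≤ q * S ^ (q - 1) * D :=
      mul_nonneg (mul_nonneg hq.le (Real.rpow_nonneg hS _)) hD0
    linarith
  · rw [min_eq_left hq1.le]
    have h1 := bern_ge hB hA hq1.le
    -- B^q + q B^(q-1) (A - B) ≤ A^q
    have h2 : B ^ q - A ^ q ≤ q * B ^ (q - 1) * (B - A) := by linarith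
    have h3 : B ^ (q - 1) ≤ S ^ (q - 1) := Real.rpow_le_rpow hB hBS (by linarith)
    have h4 : q * B ^ (q - 1) * (B - A) ≤ q * S ^ (q - 1) * D := by
      have h5 : B ^ (q - 1) * (B - A) ≤ S ^ (q - 1) * D :=
        mul_le_mul h3 hD (by linarith) (Real.rpow_nonneg hS _)
      calc q * B ^ (q - 1) * (B - A) = q * (B ^ (q - 1) * (B - A)) := by ring
        _ ≤ q * (S ^ (q - 1) * D) := mul_le_mul_of_nonneg_left h5 hq.le
        _ = q * S ^ (q - 1) * D := by ring
    rw [Real.rpow_one]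
    linarith

noncomputable def gradPK (N : ℕ) (p κ : ℝ) (x : EuclideanSpace ℝ (Fin N)) :
    EuclideanSpace ℝ (Fin N) :=
  ((κ ^ 2 + ‖x‖ ^ 2) ^ ((p - 2) / 2)) • x

set_option maxHeartbeats 1000000 in
lemma hasGradientAt_psiPK {N : ℕ} {p κ : ℝ} (hp : 1 < p) (hκ : 0 ≤ κ)
    (x : EuclideanSpace ℝ (Fin N)) :
    HasGradientAt (PsiPK N p κ) (gradPK N p κ x) x := by
  have hfun : PsiPK N p κ = fun ξ : EuclideanSpace ℝ (Fin N) =>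
      (1 / p) * ((κ ^ 2 + (inner ℝ ξ ξ : ℝ)) ^ (p / 2) - κ ^ p) := by
    funext ξ
    rw [PsiPK, real_inner_self_eq_norm_sq]
  rcases eq_or_lt_of_le (show (0:ℝ) ≤ κ ^ 2 + ‖x‖ ^ 2 by positivity) with hA | hA
  · -- degenerate point : κ = 0 and x = 0
    have hκ0 : κ = 0 := by nlinarith [sq_nonneg κ, sq_nonneg ‖x‖, norm_nonneg x]
    have hx0 : x = 0 := by
      have : ‖x‖ = 0 := by nlinarith [sq_nonneg κ, norm_nonneg x]
      simpa using this
    subst hκ0 hx0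
    have hg : gradPK N p 0 0 = 0 := by simp [gradPK]
    rw [hg]
    rw [hasGradientAt_iff_hasFDerivAt]
    have hd : (InnerProductSpace.toDual ℝ (EuclideanSpace ℝ (Fin N))) 0 = 0 := by
      simp
    rw [hd]
    rw [hasFDerivAt_iff_isLittleO_nhds_zero]
    rw [Asymptotics.isLittleO_iff]
    intro c hc
    have hten : Tendsto (fun ξ : EuclideanSpace ℝ (Fin N) => (1/p) * ‖ξ‖ ^ (p - 1))
        (𝓝 0) (𝓝 0) := by
      have h1 : Tendsto (fun ξ : EuclideanSpace ℝ (Fin N) => ‖ξ‖) (𝓝 0) (𝓝 0) := by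
        simpa using (continuous_norm (E := EuclideanSpace ℝ (Fin N))).tendsto 0
      have h2 : ContinuousAt (fun t : ℝ => t ^ (p - 1)) 0 :=
        Real.continuousAt_rpow_const 0 (p - 1) (Or.inr (by linarith))
      have h3 := h2.tendsto.comp h1
      rw [Real.zero_rpow (by linarith : p - 1 ≠ 0)] at h3
      simpa using (h3.const_mul (1/p))
    filter_upwards [hten.eventually_le_const hc, eventually_mem_nhds_iff.mpr
      (Filter.univ_mem)] with ξ hξ _
    have hnn : (0:ℝ) ≤ ‖ξ‖ := norm_nonneg ξ
    have hval : (fun h : EuclideanSpace ℝ (Fin N) => PsiPK N p 0 (0 + h) - PsiPK N p 0 0) ξ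
        = (1/p) * ‖ξ‖ ^ p := by
      simp only [zero_add, PsiPK, norm_zero]
      rw [Real.zero_rpow (by positivity : p ≠ 0)]
      have h02 : ((0:ℝ) ^ 2 : ℝ) = 0 := by norm_num
      rw [h02]
      have : (‖ξ‖ ^ 2 : ℝ) = ‖ξ‖ ^ (2:ℝ) := by
        rw [← Real.rpow_natCast ‖ξ‖ 2]; norm_num
      rw [zero_add, this, ← Real.rpow_mul hnn]
      norm_num
      rw [Real.zero_rpow (by positivity : p/2 ≠ 0)]
      ring
    have hexp : PsiPK N p 0 (0 + ξ) - PsiPK N p 0 0 - (0 : EuclideanSpace ℝ (Fin N) →L[ℝ] ℝ) ξ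
        = (1/p) * ‖ξ‖ ^ p := by
      rw [show ((0 : EuclideanSpace ℝ (Fin N) →L[ℝ] ℝ) ξ) = 0 from rfl, sub_zero]
      exact hval
    rw [hexp]
    have hsplit : ‖ξ‖ ^ p = ‖ξ‖ ^ (p - 1) * ‖ξ‖ := by
      rw [show p = p - 1 + 1 by ring, Real.rpow_add' hnn (by intro h; linarith : p - 1 + 1 ≠ 0)]
      rw [Real.rpow_one]; ring_nf
    have habs : ‖(1/p) * ‖ξ‖ ^ p‖ = (1/p) * ‖ξ‖ ^ (p-1) * ‖ξ‖ := by
      rw [Real.norm_eq_abs, abs_of_nonneg (by positivity), hsplit]; ring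
    rw [habs]
    exact mul_le_mul_of_nonneg_right hξ hnn
  · -- nondegenerate point
    rw [hfun]
    have hA' : (0:ℝ) < κ ^ 2 + (inner ℝ x x : ℝ) := by
      rwa [real_inner_self_eq_norm_sq]
    have hinner : HasFDerivAt (fun ξ : EuclideanSpace ℝ (Fin N) => (inner ℝ ξ ξ : ℝ))
        ((fderivInnerCLM ℝ (x, x)).comp
          ((ContinuousLinearMap.id ℝ (EuclideanSpace ℝ (Fin N))).prod
            (ContinuousLinearMap.id ℝ (EuclideanSpace ℝ (Fin N))))) x :=
      (hasFDerivAt_id x).inner ℝ (hasFDerivAt_id x)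
    have h2 : HasFDerivAt (fun ξ : EuclideanSpace ℝ (Fin N) => κ ^ 2 + (inner ℝ ξ ξ : ℝ)) _ x := hinner.const_add (κ ^ 2)
    have h3 := (Real.hasDerivAt_rpow_const (p := p/2) (x := κ ^ 2 + (inner ℝ x x : ℝ))
      (Or.inl hA'.ne')).comp_hasFDerivAt x h2
    have h4 := (h3.sub_const (κ ^ p)).const_mul (1/p)
    rw [hasGradientAt_iff_hasFDerivAt]
    refine h4.congr_fderiv ?_
    refine ContinuousLinearMap.ext fun v => ?_
    simp only [InnerProductSpace.toDual_apply_apply, ContinuousLinearMap.smul_apply,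
      ContinuousLinearMap.coe_comp', Function.comp_apply, ContinuousLinearMap.prod_apply,
      ContinuousLinearMap.coe_id', id_eq, fderivInnerCLM_apply, smul_eq_mul]
    rw [gradPK, real_inner_smul_left, real_inner_self_eq_norm_sq]
    rw [real_inner_comm x v, show (p-2)/2 = p/2 - 1 by ring]
    have hp0 : p ≠ 0 := by linarith
    field_simp
    ring

set_option maxHeartbeats 1000000 in
lemma psiPK_tangent (N : ℕ) {p κ : ℝ} (hp : 1 < p) (hκ : 0 ≤ κ)
    (x z : EuclideanSpace ℝ (Fin N)) :
    PsiPK N p κ x + (inner ℝ (gradPK N p κ x) (z - x) : ℝ) ≤ PsiPK N p κ z := by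
  have hp0 : (0:ℝ) < p := by linarith
  have hinner : (inner ℝ (gradPK N p κ x) (z - x) : ℝ)
      = (κ ^ 2 + ‖x‖ ^ 2) ^ ((p - 2)/2) * ((inner ℝ x z : ℝ) - ‖x‖ ^ 2) := by
    rw [gradPK, real_inner_smul_left, inner_sub_right, real_inner_self_eq_norm_sq]
  rw [hinner, PsiPK, PsiPK]
  have hBnn : (0:ℝ) ≤ κ ^ 2 + ‖z‖ ^ 2 := by positivity
  rcases eq_or_lt_of_le (show (0:ℝ) ≤ κ ^ 2 + ‖x‖ ^ 2 by positivity) with hA | hA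
  · -- x = 0, κ = 0
    have hκ0 : κ = 0 := by nlinarith [sq_nonneg κ, sq_nonneg ‖x‖]
    have hx0 : x = 0 := by
      have : ‖x‖ = 0 := by nlinarith [sq_nonneg κ, norm_nonneg x]
      simpa using this
    subst hκ0 hx0
    simp only [inner_zero_left, norm_zero]
    have e1 : ((0:ℝ) ^ 2 + (0:ℝ) ^ 2) = 0 := by norm_num
    have e2 : ((0:ℝ) ^ 2 + ‖z‖ ^ 2) = ‖z‖ ^ 2 := by norm_num
    rw [e1, e2, Real.zero_rpow (by positivity : p/2 ≠ 0),
      Real.zero_rpow (by positivity : p ≠ 0)]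
    have h3 : (0:ℝ) ≤ (‖z‖ ^ 2 : ℝ) ^ (p/2) := Real.rpow_nonneg (by positivity) _
    have h4 : (0:ℝ) ≤ 1/p := by positivity
    nlinarith [h3, h4]
  · set A := κ ^ 2 + ‖x‖ ^ 2 with hAdef
    set B := κ ^ 2 + ‖z‖ ^ 2 with hBdef
    set a := Real.sqrt A with hadef
    set b := Real.sqrt B with hbdef
    have ha : 0 < a := Real.sqrt_pos.2 hA
    have hb : 0 ≤ b := Real.sqrt_nonneg B
    have haA : a ^ 2 = A := Real.sq_sqrt hA.le
    have hAp : A ^ (p/2) = a ^ p := by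
      rw [sqrt_rpow_eq hA.le, show 2 * (p/2) = p by ring]
    have hBp : B ^ (p/2) = b ^ p := by
      rw [sqrt_rpow_eq hBnn, show 2 * (p/2) = p by ring]
    have hAq : A ^ ((p-2)/2) = a ^ (p - 2) := by
      rw [sqrt_rpow_eq hA.le, show 2 * ((p-2)/2) = p - 2 by ring]
    have hbern := bern_ge ha.le hb (le_of_lt hp)
    have hixz : (inner ℝ x z : ℝ) ≤ ‖x‖ * ‖z‖ := real_inner_le_norm x z
    have hab : κ ^ 2 + ‖x‖ * ‖z‖ ≤ a * b := by
      rw [hadef, hbdef, ← Real.sqrt_mul hA.le]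
      have h1 : (0:ℝ) ≤ κ ^ 2 + ‖x‖ * ‖z‖ := by positivity
      refine (Real.le_sqrt h1 (by positivity)).2 ?_
      nlinarith [mul_nonneg (sq_nonneg κ) (sq_nonneg (‖x‖ - ‖z‖))]
    have hpow_pos : (0:ℝ) < a ^ (p - 2) := Real.rpow_pos_of_pos ha _
    have hp1 : a ^ (p - 1) = a ^ (p - 2) * a := by
      rw [show p - 1 = p - 2 + 1 by ring, Real.rpow_add ha, Real.rpow_one]
    -- inner ℝ x z - ‖x‖^2 ≤ a * (b - a)
    have hkey : (inner ℝ x z : ℝ) - ‖x‖ ^ 2 ≤ a * (b - a) := by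
      have : a * (b - a) = a * b - A := by rw [← haA]; ring
      rw [this]
      nlinarith [hixz, hab]
    have hmul : a ^ (p - 2) * ((inner ℝ x z : ℝ) - ‖x‖ ^ 2) ≤ a ^ (p - 1) * (b - a) := by
      rw [hp1]
      calc a ^ (p - 2) * ((inner ℝ x z : ℝ) - ‖x‖ ^ 2) ≤ a ^ (p - 2) * (a * (b - a)) :=
            mul_le_mul_of_nonneg_left hkey hpow_pos.le
        _ = a ^ (p - 2) * a * (b - a) := by ring
    rw [hAp, hBp, hAq]
    have hfin : p * (a ^ (p - 2) * ((inner ℝ x z : ℝ) - ‖x‖ ^ 2)) ≤ b ^ p - a ^ p := by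
      calc p * (a ^ (p - 2) * ((inner ℝ x z : ℝ) - ‖x‖ ^ 2))
          ≤ p * (a ^ (p - 1) * (b - a)) := mul_le_mul_of_nonneg_left hmul hp0.le
        _ = p * a ^ (p - 1) * (b - a) := by ring
        _ ≤ b ^ p - a ^ p := by linarith [hbern]
    have hT : a ^ (p - 2) * ((inner ℝ x z : ℝ) - ‖x‖ ^ 2) ≤ (b ^ p - a ^ p)/p := by
      rw [le_div_iff₀ hp0]; linarith [hfin]
    have hring : 1/p * (b ^ p - κ ^ p) - 1/p * (a ^ p - κ ^ p) = (b ^ p - a ^ p)/p := by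
      ring
    linarith [hT, hring]

set_option maxHeartbeats 1000000 in
lemma psiPK_bregman_le_two (N : ℕ) {p κ : ℝ} (hp : 1 < p) (hp2 : p ≤ 2) (hκ : 0 ≤ κ)
    (x z : EuclideanSpace ℝ (Fin N)) :
    PsiPK N p κ z - PsiPK N p κ x - (inner ℝ (gradPK N p κ x) (z - x) : ℝ)
      ≤ ((2:ℝ) ^ p / p + 2) * ‖z - x‖ ^ p := by
  have hp0 : (0:ℝ) < p := by linarith
  rcases eq_or_ne z x with rfl | hne
  · simp only [sub_self, inner_zero_right, norm_zero]
    rw [Real.zero_rpow hp0.ne']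
    simp
  have hKnn : (0:ℝ) ≤ (2:ℝ) ^ p / p + 2 := by positivity
  have hinner : (inner ℝ (gradPK N p κ x) (z - x) : ℝ)
      = (κ ^ 2 + ‖x‖ ^ 2) ^ ((p - 2)/2) * ((inner ℝ x z : ℝ) - ‖x‖ ^ 2) := by
    rw [gradPK, real_inner_smul_left, inner_sub_right, real_inner_self_eq_norm_sq]
  rw [hinner, PsiPK, PsiPK]
  set A := κ ^ 2 + ‖x‖ ^ 2 with hAdef
  set B := κ ^ 2 + ‖z‖ ^ 2 with hBdef
  set I := (inner ℝ x z : ℝ) with hIdef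
  set r := ‖z - x‖ with hrdef
  have hAnn : (0:ℝ) ≤ A := by positivity
  have hBnn : (0:ℝ) ≤ B := by positivity
  have hrnn : (0:ℝ) ≤ r := norm_nonneg _
  have hiden : r ^ 2 = ‖z‖ ^ 2 - 2 * I + ‖x‖ ^ 2 := by
    rw [hrdef, hIdef, norm_sub_sq_real, real_inner_comm]
  have hr0 : (0:ℝ) < r := norm_pos_iff.2 (sub_ne_zero.2 hne)
  rcases le_or_gt r ‖x‖ with hcase | hcase
  · -- 0 < r ≤ ‖x‖ : use concavity at A
    have hX : (0:ℝ) < ‖x‖ := lt_of_lt_of_le hr0 hcase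
    have hApos : (0:ℝ) < A := by rw [hAdef]; positivity
    have hconc := bern_le hApos hBnn (by positivity : (0:ℝ) ≤ p/2) (by linarith : p/2 ≤ 1)
    -- B^(p/2) ≤ A^(p/2) + (p/2) A^(p/2-1) (B - A)
    have hq : A ^ (p/2 - 1) = A ^ ((p-2)/2) := by congr 1; ring
    rw [hq] at hconc
    have hqnp : (p-2)/2 ≤ (0:ℝ) := by linarith
    have hAq_nn : (0:ℝ) ≤ A ^ ((p-2)/2) := Real.rpow_nonneg hAnn _
    have hstep : 1/p * (B ^ (p/2) - κ ^ p) - 1/p * (A ^ (p/2) - κ ^ p)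
        - A ^ ((p-2)/2) * (I - ‖x‖ ^ 2) ≤ A ^ ((p-2)/2) * r ^ 2 / 2 := by
      have h1 : 1/p * (B ^ (p/2) - κ ^ p) - 1/p * (A ^ (p/2) - κ ^ p)
          ≤ (1/2) * A ^ ((p-2)/2) * (B - A) := by
        have h2 : 1/p * (B ^ (p/2)) ≤ 1/p * (A ^ (p/2) + p/2 * A ^ ((p-2)/2) * (B - A)) :=
          mul_le_mul_of_nonneg_left hconc (by positivity)
        have h3 : 1/p * (A ^ (p/2) + p/2 * A ^ ((p-2)/2) * (B - A))
            = 1/p * A ^ (p/2) + (1/2) * A ^ ((p-2)/2) * (B - A) := by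
          field_simp
        rw [h3] at h2; linarith
      have h4 : (1/2) * A ^ ((p-2)/2) * (B - A) - A ^ ((p-2)/2) * (I - ‖x‖ ^ 2)
          = A ^ ((p-2)/2) * r ^ 2 / 2 := by
        have hBA : B - A = ‖z‖ ^ 2 - ‖x‖ ^ 2 := by rw [hAdef, hBdef]; ring
        rw [hBA]
        linear_combination (-(A ^ ((p-2)/2)) / 2) * hiden
      linarith
    have hbound : A ^ ((p-2)/2) ≤ r ^ (p - 2) := by
      have h5 : A ^ ((p-2)/2) ≤ (‖x‖ ^ 2 : ℝ) ^ ((p-2)/2) := by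
        apply Real.rpow_le_rpow_of_nonpos (by positivity) (by rw [hAdef]; nlinarith [sq_nonneg κ]) hqnp
      have h6 : (‖x‖ ^ 2 : ℝ) ^ ((p-2)/2) = ‖x‖ ^ (p - 2) := by
        rw [sq_rpow_eq hX.le]; congr 1; ring
      have h7 : ‖x‖ ^ (p - 2) ≤ r ^ (p - 2) :=
        Real.rpow_le_rpow_of_nonpos hr0 hcase (by linarith)
      calc A ^ ((p-2)/2) ≤ (‖x‖ ^ 2 : ℝ) ^ ((p-2)/2) := h5
        _ = ‖x‖ ^ (p - 2) := h6
        _ ≤ r ^ (p - 2) := h7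
    have hrp : r ^ (p - 2) * r ^ 2 = r ^ p := by
      rw [← Real.rpow_natCast r 2, ← Real.rpow_add hr0]
      norm_num
    calc 1/p * (B ^ (p/2) - κ ^ p) - 1/p * (A ^ (p/2) - κ ^ p)
          - A ^ ((p-2)/2) * (I - ‖x‖ ^ 2) ≤ A ^ ((p-2)/2) * r ^ 2 / 2 := hstep
      _ ≤ r ^ (p - 2) * r ^ 2 / 2 := by
          have := mul_le_mul_of_nonneg_right hbound (by positivity : (0:ℝ) ≤ r ^ 2)
          linarith
      _ = r ^ p / 2 := by rw [hrp]
      _ ≤ ((2:ℝ) ^ p / p + 2) * r ^ p := by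
          have hrpn : (0:ℝ) ≤ r ^ p := Real.rpow_nonneg hrnn _
          have h2p : (0:ℝ) ≤ (2:ℝ) ^ p / p := by positivity
          nlinarith [mul_nonneg h2p hrpn, hrpn]
  · -- ‖x‖ < r
    have hterm2 : A ^ ((p-2)/2) * (‖x‖ * r) ≤ r ^ (p-1) * r := by
      rcases eq_or_lt_of_le (norm_nonneg x) with hx0 | hx0
      · rw [← hx0]
        have h0 : (0:ℝ) ≤ r ^ (p-1) * r := by positivity
        simpa using h0
      · have h5 : A ^ ((p-2)/2) ≤ ((‖x‖^2 : ℝ)) ^ ((p-2)/2) := by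
          refine Real.rpow_le_rpow_of_nonpos (pow_pos hx0 2) ?_ (by linarith)
          rw [hAdef]; nlinarith [sq_nonneg κ]
        have h6 : ((‖x‖^2 : ℝ)) ^ ((p-2)/2) = ‖x‖ ^ (p-2) := by
          rw [sq_rpow_eq hx0.le]; congr 1; ring
        have h7 : ‖x‖ ^ (p-2) * ‖x‖ = ‖x‖ ^ (p-1) := by
          rw [show p - 1 = p - 2 + 1 by ring, Real.rpow_add hx0, Real.rpow_one]
        have h8 : ‖x‖ ^ (p-1) ≤ r ^ (p-1) := Real.rpow_le_rpow hx0.le hcase.le (by linarith)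
        calc A ^ ((p-2)/2) * (‖x‖ * r) ≤ ‖x‖ ^ (p-2) * (‖x‖ * r) :=
              mul_le_mul_of_nonneg_right (h5.trans_eq h6) (by positivity)
          _ = (‖x‖ ^ (p-2) * ‖x‖) * r := by ring
          _ = ‖x‖ ^ (p-1) * r := by rw [h7]
          _ ≤ r ^ (p-1) * r := mul_le_mul_of_nonneg_right h8 hr0.le
    have hAq_nn : (0:ℝ) ≤ A ^ ((p-2)/2) := Real.rpow_nonneg hAnn _
    have hIbound : -(A ^ ((p-2)/2) * (I - ‖x‖ ^ 2)) ≤ A ^ ((p-2)/2) * (‖x‖ * r) := by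
      have h9 : I - ‖x‖ ^ 2 = (inner ℝ x (z - x) : ℝ) := by
        rw [inner_sub_right, real_inner_self_eq_norm_sq]
      have h10 : |(inner ℝ x (z - x) : ℝ)| ≤ ‖x‖ * r := abs_real_inner_le_norm x (z-x)
      calc -(A ^ ((p-2)/2) * (I - ‖x‖ ^ 2))
          = A ^ ((p-2)/2) * (-(inner ℝ x (z-x) : ℝ)) := by rw [← h9]; ring
        _ ≤ A ^ ((p-2)/2) * (‖x‖ * r) := by
            refine mul_le_mul_of_nonneg_left ?_ hAq_nn
            exact (neg_le_abs _).trans h10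
    have hκp : ((κ^2 : ℝ)) ^ (p/2) = κ ^ p := by rw [sq_rpow_eq hκ]; congr 1; ring
    have hzp : ((‖z‖^2 : ℝ)) ^ (p/2) = ‖z‖ ^ p := by
      rw [sq_rpow_eq (norm_nonneg z)]; congr 1; ring
    have hBsub : B ^ (p/2) ≤ κ ^ p + ‖z‖ ^ p := by
      rw [hBdef, ← hκp, ← hzp]
      exact rpow_subadd (sq_nonneg κ) (sq_nonneg ‖z‖) (by positivity) (by linarith)
    have hAge : κ ^ p ≤ A ^ (p/2) := by
      rw [← hκp]
      exact Real.rpow_le_rpow (sq_nonneg κ) (by rw [hAdef]; nlinarith [sq_nonneg ‖x‖])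
        (by positivity)
    have hz2r : ‖z‖ ≤ 2 * r := by
      have h11 : ‖z‖ ≤ ‖x‖ + ‖z - x‖ := by
        calc ‖z‖ = ‖x + (z - x)‖ := by congr 1; abel
          _ ≤ ‖x‖ + ‖z - x‖ := norm_add_le _ _
      have h12 : ‖z - x‖ = r := rfl
      rw [h12] at h11; linarith
    have hzrp : ‖z‖ ^ p ≤ 2 ^ p * r ^ p := by
      calc ‖z‖ ^ p ≤ (2*r) ^ p := Real.rpow_le_rpow (norm_nonneg z) hz2r hp0.le
        _ = 2 ^ p * r ^ p := Real.mul_rpow (by norm_num) hr0.le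
    have hrp1 : r ^ (p-1) * r = r ^ p := by
      have h := Real.rpow_add hr0 (p-1) 1
      rw [Real.rpow_one] at h
      rw [← h]; congr 1; ring
    have hrpn : (0:ℝ) ≤ r ^ p := Real.rpow_nonneg hrnn _
    have hpinv : (0:ℝ) ≤ 1/p := by positivity
    have m1 : 1/p * B ^ (p/2) ≤ 1/p * (κ ^ p + ‖z‖ ^ p) :=
      mul_le_mul_of_nonneg_left hBsub hpinv
    have m2 : 1/p * κ ^ p ≤ 1/p * A ^ (p/2) := mul_le_mul_of_nonneg_left hAge hpinv
    have m3 : 1/p * ‖z‖ ^ p ≤ 1/p * (2 ^ p * r ^ p) := mul_le_mul_of_nonneg_left hzrp hpinv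
    have m4 : 1/p * (2 ^ p * r ^ p) = (2 ^ p / p) * r ^ p := by ring
    linarith [m1, m2, m3, m4, hterm2, hIbound, hrp1, hrpn]

set_option maxHeartbeats 2000000 in
lemma psiPK_bregman_gt_two (N : ℕ) {p κ : ℝ} (hp2 : 2 < p) (hκ : 0 ≤ κ) {ρ : ℝ} (hρ : 1 ≤ ρ) :
    ∃ Abd : ℝ, 0 ≤ Abd ∧ ∀ x z : EuclideanSpace ℝ (Fin N), ‖x‖ ≤ ρ → ‖z‖ ≤ ρ →
      PsiPK N p κ z - PsiPK N p κ x - (inner ℝ (gradPK N p κ x) (z - x) : ℝ)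
        ≤ Abd * ‖z - x‖ ^ (1 + min 1 ((p-2)/2)) := by
  have hp0 : (0:ℝ) < p := by linarith
  have hρ0 : (0:ℝ) < ρ := by linarith
  set q := (p-2)/2 with hqdef
  have hq : 0 < q := by rw [hqdef]; linarith
  set m := min 1 q with hmdef
  have hm0 : 0 < m := lt_min one_pos hq
  have hm1 : m ≤ 1 := min_le_left _ _
  set S := κ ^ 2 + ρ ^ 2 with hSdef
  have hS0 : (0:ℝ) < S := by positivity
  set c₁ : ℝ := S ^ q * (2*ρ) ^ (1-m) / 2 with hc1def
  set c₂ : ℝ := ρ * (2*ρ) ^ m + q * S ^ (q-1) * 2 * ρ * ρ * (2*ρ) ^ (1-m) with hc2def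
  refine ⟨c₁ + c₂, by positivity, fun x z hx hz => ?_⟩
  rcases eq_or_ne z x with rfl | hne
  · simp only [sub_self, inner_zero_right, norm_zero]
    rw [Real.zero_rpow (by positivity : 1 + m ≠ 0)]
    simp
  have hinner : (inner ℝ (gradPK N p κ x) (z - x) : ℝ)
      = (κ ^ 2 + ‖x‖ ^ 2) ^ q * ((inner ℝ x z : ℝ) - ‖x‖ ^ 2) := by
    rw [gradPK, real_inner_smul_left, inner_sub_right, real_inner_self_eq_norm_sq]
  rw [hinner, PsiPK, PsiPK]
  set A := κ ^ 2 + ‖x‖ ^ 2 with hAdef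
  set B := κ ^ 2 + ‖z‖ ^ 2 with hBdef
  set T := (inner ℝ x z : ℝ) - ‖x‖ ^ 2 with hTdef
  set r := ‖z - x‖ with hrdef
  have hAnn : (0:ℝ) ≤ A := by positivity
  have hBnn : (0:ℝ) ≤ B := by positivity
  have hr0 : (0:ℝ) < r := norm_pos_iff.2 (sub_ne_zero.2 hne)
  have hAS : A ≤ S := by rw [hAdef, hSdef]; nlinarith [norm_nonneg x]
  have hBS : B ≤ S := by rw [hBdef, hSdef]; nlinarith [norm_nonneg z]
  have hiden : r ^ 2 = ‖z‖ ^ 2 - 2 * (inner ℝ x z : ℝ) + ‖x‖ ^ 2 := by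
    rw [hrdef, norm_sub_sq_real, real_inner_comm]
  have h_id : B - A = r ^ 2 + 2 * T := by
    rw [hBdef, hAdef, hTdef]; linear_combination -hiden
  have hr2ρ : r ≤ 2 * ρ := by
    calc r ≤ ‖z‖ + ‖x‖ := norm_sub_le _ _
      _ ≤ 2 * ρ := by linarith
  -- the quadratic term bound : r^2 ≤ (2ρ)^(1-m) * r^(1+m)
  have h_r2 : (r:ℝ) ^ (2:ℕ) ≤ (2*ρ) ^ (1-m) * r ^ (1+m) := by
    have e1 : (r:ℝ) ^ (2:ℕ) = r ^ (1-m) * r ^ (1+m) := by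
      rw [← Real.rpow_add hr0, show (1-m) + (1+m) = (2:ℝ) by ring,
        ← Real.rpow_natCast r 2]
      norm_num
    rw [e1]
    apply mul_le_mul_of_nonneg_right
      (Real.rpow_le_rpow hr0.le hr2ρ (by linarith)) (Real.rpow_nonneg hr0.le _)
  -- tangent line at B for t ↦ t^(p/2)
  have h_tan : B ^ (p/2) - A ^ (p/2) ≤ (p/2) * B ^ q * (B - A) := by
    have h1 := bern_ge hBnn hAnn (by linarith : (1:ℝ) ≤ p/2)
    have h2 : B ^ (p/2 - 1) = B ^ q := by rw [hqdef]; congr 1; ring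
    rw [h2] at h1
    linarith
  have h_scaled : 1/p * (B ^ (p/2) - κ ^ p) - 1/p * (A ^ (p/2) - κ ^ p)
      ≤ (1/2) * B ^ q * (B - A) := by
    have h3 := mul_le_mul_of_nonneg_left h_tan (by positivity : (0:ℝ) ≤ 1/p)
    have h4 : 1/p * ((p/2) * B ^ q * (B - A)) = (1/2) * B ^ q * (B - A) := by
      field_simp
    linarith [h3, h4]
  -- split
  have h_split : (1/2) * B ^ q * (B - A) - A ^ q * T
      = (1/2) * B ^ q * r ^ (2:ℕ) + (B ^ q - A ^ q) * T := by
    linear_combination (B ^ q / 2) * h_id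
  -- bound the quadratic piece
  have h_Bq_S : B ^ q ≤ S ^ q := Real.rpow_le_rpow hBnn hBS hq.le
  have e_quad : (1/2) * B ^ q * r ^ (2:ℕ) ≤ c₁ * r ^ (1+m) := by
    have h5 : B ^ q * r ^ (2:ℕ) ≤ S ^ q * ((2*ρ) ^ (1-m) * r ^ (1+m)) := by
      calc B ^ q * r ^ (2:ℕ) ≤ S ^ q * r ^ (2:ℕ) :=
            mul_le_mul_of_nonneg_right h_Bq_S (by positivity)
        _ ≤ S ^ q * ((2*ρ) ^ (1-m) * r ^ (1+m)) :=
            mul_le_mul_of_nonneg_left h_r2 (Real.rpow_nonneg hS0.le _)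
    have h6 : c₁ * r ^ (1+m) = (1/2) * (S ^ q * ((2*ρ) ^ (1-m) * r ^ (1+m))) := by
      rw [hc1def]; ring
    rw [h6]; linarith
  -- bound the difference piece
  have h_T : |T| ≤ ρ * r := by
    have h7 : T = (inner ℝ x (z - x) : ℝ) := by
      rw [hTdef, inner_sub_right, real_inner_self_eq_norm_sq]
    rw [h7]
    calc |(inner ℝ x (z - x) : ℝ)| ≤ ‖x‖ * ‖z - x‖ := abs_real_inner_le_norm _ _
      _ ≤ ρ * r := by
          rw [← hrdef]
          exact mul_le_mul_of_nonneg_right hx (norm_nonneg _)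
  have h_BA : |B - A| ≤ 2 * ρ * r := by
    have h8 : B - A = (‖z‖ + ‖x‖) * (‖z‖ - ‖x‖) := by rw [hBdef, hAdef]; ring
    rw [h8, abs_mul]
    have h9 : |‖z‖ - ‖x‖| ≤ r := by
      rw [hrdef]; exact abs_norm_sub_norm_le z x
    have h10 : |‖z‖ + ‖x‖| ≤ 2 * ρ := by
      rw [abs_of_nonneg (by positivity)]; linarith
    exact mul_le_mul h10 h9 (abs_nonneg _) (by positivity)
  have h_diff : |B ^ q - A ^ q| ≤ (2*ρ*r) ^ m + q * S ^ (q-1) * (2*ρ*r) := by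
    have hD0 : (0:ℝ) ≤ 2*ρ*r := by positivity
    rcases le_total A B with hAB | hAB
    · rw [abs_of_nonneg (by
        have := Real.rpow_le_rpow hAnn hAB hq.le; linarith)]
      exact rpow_diff_le hq hAnn hAB hBS (by cases' abs_le.1 h_BA with h _; linarith) hD0
    · rw [abs_of_nonpos (by
        have := Real.rpow_le_rpow hBnn hAB hq.le; linarith)]
      have := rpow_diff_le hq hBnn hAB hAS
        (by cases' abs_le.1 h_BA with h _; linarith) hD0
      linarith
  have e_diff : (B ^ q - A ^ q) * T ≤ c₂ * r ^ (1+m) := by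
    have h11 : (B ^ q - A ^ q) * T ≤ |B ^ q - A ^ q| * |T| := by
      calc (B ^ q - A ^ q) * T ≤ |(B ^ q - A ^ q) * T| := le_abs_self _
        _ = |B ^ q - A ^ q| * |T| := abs_mul _ _
    have h12 : |B ^ q - A ^ q| * |T| ≤ ((2*ρ*r) ^ m + q * S ^ (q-1) * (2*ρ*r)) * (ρ * r) :=
      mul_le_mul h_diff h_T (abs_nonneg _) (by positivity)
    have h13 : (2*ρ*r) ^ m = (2*ρ) ^ m * r ^ m := Real.mul_rpow (by positivity) hr0.le
    have h14 : r ^ m * r = r ^ (1+m) := by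
      have hh := Real.rpow_add hr0 m 1
      rw [Real.rpow_one] at hh
      rw [← hh]; congr 1; ring
    have h15 : ((2*ρ*r) ^ m + q * S ^ (q-1) * (2*ρ*r)) * (ρ * r)
        = ρ * (2*ρ) ^ m * (r ^ m * r) + q * S ^ (q-1) * 2 * ρ * ρ * (r * r) := by
      rw [h13]; ring
    have h16 : (r:ℝ) * r = r ^ (2:ℕ) := by ring
    have h17 : q * S ^ (q-1) * 2 * ρ * ρ * (r * r)
        ≤ q * S ^ (q-1) * 2 * ρ * ρ * ((2*ρ) ^ (1-m) * r ^ (1+m)) := by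
      rw [h16]
      exact mul_le_mul_of_nonneg_left h_r2 (by positivity)
    have h18 : c₂ * r ^ (1+m) = ρ * (2*ρ) ^ m * r ^ (1+m)
        + q * S ^ (q-1) * 2 * ρ * ρ * ((2*ρ) ^ (1-m) * r ^ (1+m)) := by
      rw [hc2def]; ring
    rw [h18]
    calc (B ^ q - A ^ q) * T ≤ |B ^ q - A ^ q| * |T| := h11
      _ ≤ ((2*ρ*r) ^ m + q * S ^ (q-1) * (2*ρ*r)) * (ρ * r) := h12
      _ = ρ * (2*ρ) ^ m * (r ^ m * r) + q * S ^ (q-1) * 2 * ρ * ρ * (r * r) := h15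
      _ ≤ ρ * (2*ρ) ^ m * r ^ (1+m)
          + q * S ^ (q-1) * 2 * ρ * ρ * ((2*ρ) ^ (1-m) * r ^ (1+m)) := by
          rw [h14]; linarith [h17]
  -- assemble
  calc 1/p * (B ^ (p/2) - κ ^ p) - 1/p * (A ^ (p/2) - κ ^ p) - A ^ q * T
      ≤ (1/2) * B ^ q * (B - A) - A ^ q * T := by linarith [h_scaled]
    _ = (1/2) * B ^ q * r ^ (2:ℕ) + (B ^ q - A ^ q) * T := h_split
    _ ≤ c₁ * r ^ (1+m) + c₂ * r ^ (1+m) := add_le_add e_quad e_diff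
    _ = (c₁ + c₂) * r ^ (1+m) := by ring

set_option maxHeartbeats 1000000 in
/-- A convex differentiable function lies above its tangent planes. -/
lemma convex_tangent_le {N : ℕ} {h : EuclideanSpace ℝ (Fin N) → ℝ}
    (hconv : ConvexOn ℝ Set.univ h) {x g : EuclideanSpace ℝ (Fin N)}
    (hg : HasGradientAt h g x) (z : EuclideanSpace ℝ (Fin N)) :
    h x + (inner ℝ g (z - x) : ℝ) ≤ h z := by
  set φ : ℝ → ℝ := fun t => h (x + t • (z - x)) with hφdef
  have hφconv : ConvexOn ℝ Set.univ φ := by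
    have haff := hconv.comp_affineMap
      (AffineMap.lineMap x z : ℝ →ᵃ[ℝ] EuclideanSpace ℝ (Fin N))
    have hpre : (AffineMap.lineMap x z : ℝ →ᵃ[ℝ] EuclideanSpace ℝ (Fin N)) ⁻¹' Set.univ
        = Set.univ := by simp
    rw [hpre] at haff
    refine haff.congr (fun t _ => Eq.symm ?_)
    show h (x + t • (z - x)) = h (AffineMap.lineMap x z t)
    rw [AffineMap.lineMap_apply]
    congr 1
    rw [vsub_eq_sub, vadd_eq_add]
    abel
  have hder : HasDerivAt φ (inner ℝ g (z - x) : ℝ) 0 := by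
    have h1 : HasDerivAt (fun t : ℝ => x + t • (z - x)) (z - x) 0 := by
      have h2 : HasDerivAt (fun t : ℝ => t • (z - x)) ((1:ℝ) • (z - x)) 0 :=
        (hasDerivAt_id 0).smul_const (z - x)
      rw [one_smul] at h2
      exact h2.const_add x
    have hg' : HasFDerivAt h ((InnerProductSpace.toDual ℝ (EuclideanSpace ℝ (Fin N))) g)
        (x + (0:ℝ) • (z - x)) := by simpa using hg.hasFDerivAt
    have h3 := hg'.comp_hasDerivAt 0 h1
    have h4 : (InnerProductSpace.toDual ℝ (EuclideanSpace ℝ (Fin N))) g (z - x)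
        = (inner ℝ g (z - x) : ℝ) := rfl
    exact h3
  -- slope inequality: φ'(0) ≤ φ 1 - φ 0
  have hslope : (inner ℝ g (z - x) : ℝ) ≤ φ 1 - φ 0 := by
    have h5 : Tendsto (slope φ 0) (𝓝[>] 0) (𝓝 (inner ℝ g (z - x) : ℝ)) :=
      (hasDerivAt_iff_tendsto_slope.1 hder).mono_left
        (nhdsWithin_mono 0 (by intro t ht; exact ne_of_gt ht))
    refine le_of_tendsto h5 ?_
    filter_upwards [Ioo_mem_nhdsGT_of_mem (Set.mem_Ico.2 ⟨le_rfl, one_pos⟩)] with t ht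
    rcases ht with ⟨ht0, ht1⟩
    have hcvx := hφconv.2 (Set.mem_univ (0:ℝ)) (Set.mem_univ (1:ℝ))
      (show (0:ℝ) ≤ 1 - t by linarith) (show (0:ℝ) ≤ t by linarith)
      (show (1:ℝ) - t + t = 1 by ring)
    have h6 : φ ((1-t) • (0:ℝ) + t • (1:ℝ)) = φ t := by norm_num
    rw [h6] at hcvx
    have h7 : slope φ 0 t = (φ t - φ 0) / t := by
      rw [slope_def_field]; field_simp; ring
    rw [h7, div_le_iff₀ ht0]
    have : (1 - t) • φ 0 + t • φ 1 = φ 0 + t * (φ 1 - φ 0) := by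
      simp [smul_eq_mul]; ring
    rw [this] at hcvx
    linarith
  have hφ0 : φ 0 = h x := by simp [hφdef]
  have hφ1 : φ 1 = h z := by simp [hφdef]
  rw [hφ0, hφ1] at hslope
  linarith

set_option maxHeartbeats 1000000 in
/-- Hölder continuity of the gradient from a Bregman upper bound plus convexity. -/
lemma holder_from_bregman {N : ℕ} {Ψ : EuclideanSpace ℝ (Fin N) → ℝ}
    {Ψ' : EuclideanSpace ℝ (Fin N) → EuclideanSpace ℝ (Fin N)}
    {α R A : ℝ} (hα0 : 0 < α) (hα1 : α ≤ 1) (hR : 0 < R) (hA : 0 ≤ A)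
    (Hlow : ∀ x z : EuclideanSpace ℝ (Fin N), Ψ x + (inner ℝ (Ψ' x) (z - x) : ℝ) ≤ Ψ z)
    (Hup : ∀ x z : EuclideanSpace ℝ (Fin N), ‖x‖ ≤ R + 1 → ‖z‖ ≤ R + 1 →
      Ψ z - Ψ x - (inner ℝ (Ψ' x) (z - x) : ℝ) ≤ A * ‖z - x‖ ^ (1 + α)) :
    ∀ x y : EuclideanSpace ℝ (Fin N), ‖x‖ ≤ R → ‖y‖ ≤ R →
      ‖Ψ' x - Ψ' y‖ ≤ (A * (2 + 2 * R)) * ‖x - y‖ ^ α := by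
  intro x y hx hy
  rcases eq_or_ne (Ψ' x) (Ψ' y) with heq | hne
  · rw [heq, sub_self, norm_zero]
    positivity
  set D := ‖Ψ' x - Ψ' y‖ with hDdef
  have hD0 : 0 < D := norm_pos_iff.2 (sub_ne_zero.2 hne)
  set u : EuclideanSpace ℝ (Fin N) := D⁻¹ • (Ψ' x - Ψ' y) with hudef
  have hu : ‖u‖ = 1 := by
    rw [hudef, norm_smul, norm_inv, Real.norm_eq_abs, abs_of_pos hD0, ← hDdef,
      inv_mul_cancel₀ hD0.ne']
  set r := ‖x - y‖ with hrdef
  have hr0 : 0 < r := by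
    rw [hrdef]
    refine norm_pos_iff.2 (sub_ne_zero.2 ?_)
    intro hxy
    exact hne (by rw [hxy])
  have hr2R : r ≤ 2 * R := by
    calc r ≤ ‖x‖ + ‖y‖ := norm_sub_le _ _
      _ ≤ 2 * R := by linarith
  -- key inequality : for all s ∈ (0,1], s * D ≤ A * s^(1+α) + A * r^(1+α)
  have hkey : ∀ s : ℝ, 0 < s → s ≤ 1 → s * D ≤ A * s ^ (1+α) + A * r ^ (1+α) := by
    intro s hs0 hs1
    set w : EuclideanSpace ℝ (Fin N) := x - s • u with hwdef
    have hwnorm : ‖w‖ ≤ R + 1 := by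
      calc ‖w‖ ≤ ‖x‖ + ‖s • u‖ := norm_sub_le _ _
        _ = ‖x‖ + s * 1 := by rw [norm_smul, Real.norm_eq_abs, abs_of_pos hs0, hu]
        _ ≤ R + 1 := by linarith
    have hwx : w - x = -(s • u) := by rw [hwdef]; abel
    have hwxn : ‖w - x‖ = s := by
      rw [hwx, norm_neg, norm_smul, Real.norm_eq_abs, abs_of_pos hs0, hu, mul_one]
    -- (1) Ψ y + ⟪Ψ' y, w - y⟫ ≤ Ψ w
    have h1 := Hlow y w
    -- (2) Ψ w ≤ Ψ x + ⟪Ψ' x, w - x⟫ + A s^(1+α)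
    have h2 := Hup x w (by linarith) hwnorm
    rw [hwxn] at h2
    -- (3) Ψ x ≤ Ψ y + ⟪Ψ' y, x - y⟫ + A r^(1+α)
    have h3 := Hup y x (by linarith) (by linarith)
    have hxy_norm : ‖x - y‖ = r := rfl
    rw [hxy_norm] at h3
    -- combine
    have e1 : (inner ℝ (Ψ' y) (w - y) : ℝ)
        = (inner ℝ (Ψ' y) (x - y) : ℝ) - s * (inner ℝ (Ψ' y) u : ℝ) := by
      rw [hwdef, show x - s • u - y = (x - y) - s • u by abel, inner_sub_right,
        real_inner_smul_right]
    have e2 : (inner ℝ (Ψ' x) (w - x) : ℝ) = - (s * (inner ℝ (Ψ' x) u : ℝ)) := by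
      rw [hwx, inner_neg_right, real_inner_smul_right]
    have e3 : s * (inner ℝ (Ψ' x) u : ℝ) - s * (inner ℝ (Ψ' y) u : ℝ) = s * D := by
      have : (inner ℝ (Ψ' x - Ψ' y) u : ℝ) = D := by
        rw [hudef, real_inner_smul_right, real_inner_self_eq_norm_sq]
        rw [← hDdef]
        field_simp
      rw [← this, inner_sub_left]; ring
    rw [e1] at h1
    rw [e2] at h2
    linarith [h1, h2, h3, e3]
  -- now choose s
  rcases le_or_gt r 1 with hr1 | hr1
  · have h4 := hkey r hr0 hr1
    have h5 : r ^ (1+α) = r * r ^ α := by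
      rw [Real.rpow_add hr0, Real.rpow_one]
    rw [h5] at h4
    have h6 : r * D ≤ r * (2 * A * r ^ α) := by nlinarith [h4]
    have h7 := le_of_mul_le_mul_left (by linarith [h6] : r * D ≤ r * (2 * A * r ^ α)) hr0
    calc D ≤ 2 * A * r ^ α := h7
      _ ≤ (A * (2 + 2 * R)) * r ^ α := by
          have : (0:ℝ) ≤ r ^ α := Real.rpow_nonneg hr0.le _
          nlinarith [this, hR, hA]
  · have h4 := hkey 1 one_pos le_rfl
    rw [Real.one_rpow, mul_one, one_mul] at h4
    have h5 : r ^ (1+α) = r * r ^ α := by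
      rw [Real.rpow_add hr0, Real.rpow_one]
    have h6 : (1:ℝ) ≤ r ^ α := Real.one_le_rpow hr1.le (by linarith)
    have h7 : A * r ^ (1+α) ≤ A * (2 * R) * r ^ α := by
      rw [h5]
      have : r * r ^ α ≤ (2 * R) * r ^ α :=
        mul_le_mul_of_nonneg_right hr2R (Real.rpow_nonneg hr0.le _)
      nlinarith [this, hA]
    have h8 : A ≤ A * r ^ α := by nlinarith [h6, hA]
    calc D ≤ A + A * r ^ (1+α) := h4
      _ ≤ A * r ^ α + A * (2 * R) * r ^ α := by linarith [h7, h8]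
      _ = (A * (2 + 2 * R)) * r ^ α - A * r ^ α := by ring
      _ ≤ (A * (2 + 2 * R)) * r ^ α := by
          have : (0:ℝ) ≤ A * r ^ α := by positivity
          linarith

/-- Under hypotheses `(Ψ₁)` and `(Ψ₂)`, the gradient map `∇Ψ` is locally
Hölder continuous: there is `α ∈ (0,1]` such that on every ball of radius `R` the map
`∇Ψ` is `α`-Hölder with some constant `L`. -/
theorem stmt_11 (N : ℕ) (hN : 1 ≤ N) (p κ ν C : ℝ) (hp : 1 < p) (hκ : 0 ≤ κ)
    (hν : 0 < ν) (hνC : ν ≤ C)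
    (Ψ : EuclideanSpace ℝ (Fin N) → ℝ)
    (Ψ' : EuclideanSpace ℝ (Fin N) → EuclideanSpace ℝ (Fin N))
    (hgrad : ∀ x, HasGradientAt Ψ (Ψ' x) x) (hΨ'cont : Continuous Ψ')
    (hΨ0 : Ψ 0 = 0) (hΨ'0 : Ψ' 0 = 0)
    (hsand : SandwichCond N p κ ν C Ψ)
    (hC2a : κ = 0 ∧ p < 2 → ContDiffOn ℝ 2 Ψ {(0 : EuclideanSpace ℝ (Fin N))}ᶜ)
    (hC2b : ¬(κ = 0 ∧ p < 2) → ContDiff ℝ 2 Ψ) :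
    ∃ α : ℝ, α ∈ Set.Ioc (0 : ℝ) 1 ∧
      ∀ R : ℝ, 0 < R → ∃ L : ℝ, 0 ≤ L ∧
        ∀ x y : EuclideanSpace ℝ (Fin N), ‖x‖ ≤ R → ‖y‖ ≤ R →
          ‖Ψ' x - Ψ' y‖ ≤ L * ‖x - y‖ ^ α := by
  have hC0 : (0:ℝ) < C := lt_of_lt_of_le hν hνC
  have hKgrad : ∀ x, HasGradientAt (PsiPK N p κ) (gradPK N p κ x) x :=
    fun x => hasGradientAt_psiPK hp hκ x
  -- tangent inequalities for the two convex pieces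
  have T1 : ∀ x z : EuclideanSpace ℝ (Fin N),
      (Ψ x - ν * PsiPK N p κ x) + (inner ℝ (Ψ' x - ν • gradPK N p κ x) (z - x) : ℝ)
        ≤ Ψ z - ν * PsiPK N p κ z := by
    intro x z
    refine convex_tangent_le hsand.1 ?_ z
    rw [hasGradientAt_iff_hasFDerivAt, map_sub, map_smul]
    exact (hgrad x).hasFDerivAt.sub (((hKgrad x).hasFDerivAt).const_mul ν)
  have T2 : ∀ x z : EuclideanSpace ℝ (Fin N),
      (C * PsiPK N p κ x - Ψ x) + (inner ℝ (C • gradPK N p κ x - Ψ' x) (z - x) : ℝ)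
        ≤ C * PsiPK N p κ z - Ψ z := by
    intro x z
    refine convex_tangent_le hsand.2 ?_ z
    rw [hasGradientAt_iff_hasFDerivAt, map_sub, map_smul]
    exact (((hKgrad x).hasFDerivAt).const_mul C).sub (hgrad x).hasFDerivAt
  -- Ψ lies above its tangent planes
  have Hlow : ∀ x z : EuclideanSpace ℝ (Fin N),
      Ψ x + (inner ℝ (Ψ' x) (z - x) : ℝ) ≤ Ψ z := by
    intro x z
    have h1 := T1 x z
    rw [inner_sub_left, real_inner_smul_left] at h1
    have h2 := psiPK_tangent N hp hκ x z
    have h3 := mul_le_mul_of_nonneg_left h2 hν.le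
    have h4 : ν * (PsiPK N p κ x + (inner ℝ (gradPK N p κ x) (z - x) : ℝ))
        = ν * PsiPK N p κ x + ν * (inner ℝ (gradPK N p κ x) (z - x) : ℝ) := by ring
    rw [h4] at h3
    linarith
  -- Bregman comparison from above
  have Hup : ∀ x z : EuclideanSpace ℝ (Fin N),
      Ψ z - Ψ x - (inner ℝ (Ψ' x) (z - x) : ℝ)
        ≤ C * (PsiPK N p κ z - PsiPK N p κ x - (inner ℝ (gradPK N p κ x) (z - x) : ℝ)) := by
    intro x z
    have h1 := T2 x z
    rw [inner_sub_left, real_inner_smul_left] at h1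
    have h2 : C * (PsiPK N p κ z - PsiPK N p κ x - (inner ℝ (gradPK N p κ x) (z - x) : ℝ))
        = C * PsiPK N p κ z - C * PsiPK N p κ x
          - C * (inner ℝ (gradPK N p κ x) (z - x) : ℝ) := by ring
    rw [h2]
    linarith
  rcases le_or_gt p 2 with hp2 | hp2
  · -- 1 < p ≤ 2 : exponent α = p - 1
    refine ⟨p - 1, ⟨by linarith, by linarith⟩, fun R hR => ?_⟩
    have hA0 : (0:ℝ) ≤ C * ((2:ℝ) ^ p / p + 2) := by positivity
    have Hup2 : ∀ x z : EuclideanSpace ℝ (Fin N), ‖x‖ ≤ R + 1 → ‖z‖ ≤ R + 1 →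
        Ψ z - Ψ x - (inner ℝ (Ψ' x) (z - x) : ℝ)
          ≤ (C * ((2:ℝ) ^ p / p + 2)) * ‖z - x‖ ^ (1 + (p - 1)) := by
      intro x z _ _
      have h5 := Hup x z
      have h6 := psiPK_bregman_le_two N hp hp2 hκ x z
      have h7 := mul_le_mul_of_nonneg_left h6 hC0.le
      rw [show (1:ℝ) + (p - 1) = p by ring]
      calc Ψ z - Ψ x - (inner ℝ (Ψ' x) (z - x) : ℝ)
          ≤ C * (PsiPK N p κ z - PsiPK N p κ x
              - (inner ℝ (gradPK N p κ x) (z - x) : ℝ)) := h5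
        _ ≤ C * (((2:ℝ) ^ p / p + 2) * ‖z - x‖ ^ p) := h7
        _ = (C * ((2:ℝ) ^ p / p + 2)) * ‖z - x‖ ^ p := by ring
    refine ⟨(C * ((2:ℝ) ^ p / p + 2)) * (2 + 2 * R), by positivity, ?_⟩
    exact holder_from_bregman (by linarith) (by linarith) hR hA0 Hlow Hup2
  · -- p > 2 : exponent α = min 1 ((p-2)/2)
    have hα0 : (0:ℝ) < min 1 ((p-2)/2) := lt_min one_pos (by linarith)
    refine ⟨min 1 ((p-2)/2), ⟨hα0, min_le_left _ _⟩, fun R hR => ?_⟩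
    obtain ⟨Abd, hAbd0, hAbd⟩ := psiPK_bregman_gt_two N hp2 hκ (ρ := R + 1) (by linarith)
    have hA0 : (0:ℝ) ≤ C * Abd := mul_nonneg hC0.le hAbd0
    have Hup2 : ∀ x z : EuclideanSpace ℝ (Fin N), ‖x‖ ≤ R + 1 → ‖z‖ ≤ R + 1 →
        Ψ z - Ψ x - (inner ℝ (Ψ' x) (z - x) : ℝ)
          ≤ (C * Abd) * ‖z - x‖ ^ (1 + min 1 ((p-2)/2)) := by
      intro x z hxn hzn
      have h5 := Hup x z
      have h6 := hAbd x z hxn hzn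
      have h7 := mul_le_mul_of_nonneg_left h6 hC0.le
      calc Ψ z - Ψ x - (inner ℝ (Ψ' x) (z - x) : ℝ)
          ≤ C * (PsiPK N p κ z - PsiPK N p κ x
              - (inner ℝ (gradPK N p κ x) (z - x) : ℝ)) := h5
        _ ≤ C * (Abd * ‖z - x‖ ^ (1 + min 1 ((p-2)/2))) := h7
        _ = (C * Abd) * ‖z - x‖ ^ (1 + min 1 ((p-2)/2)) := by ring
    refine ⟨(C * Abd) * (2 + 2 * R), by positivity, ?_⟩
    exact holder_from_bregman hα0 (min_le_left _ _) hR hA0 Hlow Hup2
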